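/- Fix a group g ∈ {1,…,k} and a value v ∈ V. Conditionally on G = g and V = v, for every row index j ∈ {1,…,k} with j ≠ g and every v' ∈ V, the entry of the decoded query column in row j is uniform: Pr(Q(j, A) = v' | G = g, V = v) = 1/(2m). -/

import Mathlib

open scoped BigOperators

noncomputable section

/-- The value alphabet `V = {±1, …, ±m} ⊆ ℤ`. -/
def Vset (m : ℕ) : Finset ℤ := (Finset.Icc (-(m : ℤ)) m).erase 0

/-- Values as a (finite) type. -/
abbrev Vt (m : ℕ) : Type := {v : ℤ // v ∈ Vset m}

/-- Query matrices: `k × 2m` matrices whose rows are permutations of `V`,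
encoded row-wise as equivalences between column indices and values. -/
abbrev Query (k m : ℕ) : Type := Fin k → (Fin (2*m) ≃ Vt m)

/-- The randomized response channel `RR_λ` on `V`: probability that input `v`
is turned into output `w`. -/
def RR (m : ℕ) (lam : ℝ) (v w : Vt m) : ℝ :=
  if w = v then 1 - lam else lam / (2*m - 1)
lemma card_Vt (m : ℕ) (hm : 0 < m) : Fintype.card (Vt m) = 2 * m := by
  have h0 : (0:ℤ) ∈ Finset.Icc (-(m : ℤ)) m := by simp
  have : Fintype.card (Vt m) = (Vset m).card := Fintype.card_coe _
  rw [this, Vset, Finset.card_erase_of_mem h0, Int.card_Icc]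
  omega


set_option maxHeartbeats 1000000 in
/-- Conditionally on `G = g` and `V = v`, for every row `j ≠ g`
and every `v' ∈ V`, the decoded query-column entry in row `j` is uniform:
`Pr(Q(j,A) = v' | G = g, V = v) = 1/(2m)`. The conditional law is computed
from the model: `Q` uniform on `𝒬`, `V̊ = RR_λ(v)` independent of `Q`, and
`A` the column of row `g` of `Q` containing `V̊`. -/
theorem stmt3 (m k : ℕ) (hm : 0 < m) (hk : 2 ≤ k)
    (p : Fin k → Vt m → ℝ)
    (hpsum : ∀ g, ∑ v : Vt m, p g v = 1)
    (hp : ∀ g v, 0 < p g v ∧ p g v < 1)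
    (lam : ℝ) (hlam0 : 0 ≤ lam) (hlam1 : lam < 1 - 1/(2*m))
    (g : Fin k) (v : Vt m) (j : Fin k) (hj : j ≠ g) (v' : Vt m) :
    (∑ q : Query k m, ∑ w : Vt m,
        (1 / (Fintype.card (Query k m) : ℝ)) * RR m lam v w *
          (if q j ((q g).symm w) = v' then (1:ℝ) else 0))
      = 1 / (2*m) := by
  have hcard := card_Vt m hm
  have hm2 : (0:ℝ) < 2 * m := by positivity
  have key : ∀ w : Vt m,
      ∑ q : Query k m, (if q j ((q g).symm w) = v' then (1:ℝ) else 0)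
        = (Fintype.card (Query k m) : ℝ) / (2*m) := by
    intro w
    have hconst : ∀ v'' : Vt m,
        ∑ q : Query k m, (if q j ((q g).symm w) = v'' then (1:ℝ) else 0)
          = ∑ q : Query k m, (if q j ((q g).symm w) = v' then (1:ℝ) else 0) := by
      intro v''
      set σ := Equiv.swap v' v'' with hσ
      let E : Query k m ≃ Query k m :=
        Equiv.piCongrRight (fun i => if i = j then (Equiv.refl (Fin (2*m))).equivCongr σ
          else Equiv.refl _)
      refine Fintype.sum_equiv E _ _ ?_
      intro q
      have hEg : E q g = q g := by
        simp [E, Equiv.piCongrRight, (by simpa [eq_comm] using hj : g ≠ j)]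
      have hEj : E q j = (q j).trans σ := by
        simp [E, Equiv.piCongrRight, Equiv.equivCongr]
      rw [hEg, hEj]
      simp only [Equiv.trans_apply]
      congr 1
      rw [eq_iff_iff]
      constructor
      · rintro rfl
        simp [σ, Equiv.swap_apply_right]
      · intro h
        have := congrArg σ h
        simpa [σ, eq_comm, Equiv.swap_apply_left, Equiv.swap_apply_self] using this.symm
    have hsum : ∑ v'' : Vt m,
        (∑ q : Query k m, (if q j ((q g).symm w) = v'' then (1:ℝ) else 0))
          = (Fintype.card (Query k m) : ℝ) := by
      rw [Finset.sum_comm]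
      have h1 : ∀ q : Query k m,
          ∑ v'' : Vt m, (if q j ((q g).symm w) = v'' then (1:ℝ) else 0) = 1 := by
        intro q; simp
      rw [Finset.sum_congr rfl (fun q _ => h1 q)]
      simp
    have h2 : (2*m : ℝ) * ∑ q : Query k m, (if q j ((q g).symm w) = v' then (1:ℝ) else 0)
        = (Fintype.card (Query k m) : ℝ) := by
      rw [← hsum, Finset.sum_congr rfl (fun v'' _ => hconst v''), Finset.sum_const,
        Finset.card_univ, hcard, nsmul_eq_mul]
      push_cast
      ring
    field_simp at h2 ⊢
    linarith [h2]
  -- now the main computation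
  have hRR : ∑ w : Vt m, RR m lam v w = 1 := by
    rw [← Finset.add_sum_erase Finset.univ _ (Finset.mem_univ v)]
    have h1 : RR m lam v v = 1 - lam := by simp [RR]
    have h2 : ∀ w ∈ Finset.univ.erase v, RR m lam v w = lam / (2*m - 1) := by
      intro w hw
      simp [RR, Finset.mem_erase.mp hw |>.1]
    rw [h1, Finset.sum_congr rfl h2, Finset.sum_const, Finset.card_erase_of_mem (Finset.mem_univ v),
      Finset.card_univ, hcard, nsmul_eq_mul]
    have hm1 : (2*m - 1 : ℝ) ≠ 0 := by
      have : (1:ℝ) ≤ m := by exact_mod_cast hm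
      nlinarith
    have : ((2*m - 1 : ℕ) : ℝ) = 2*m - 1 := by
      push_cast [Nat.cast_sub (by omega : 1 ≤ 2*m)]
      ring
    rw [this]
    field_simp
    ring
  rw [Finset.sum_comm]
  have hN : (0:ℝ) < (Fintype.card (Query k m) : ℝ) := by
    have : Nonempty (Query k m) := by
      have e : Vt m ≃ Fin (2*m) := Fintype.equivFinOfCardEq hcard
      exact ⟨fun _ => e.symm⟩
    exact_mod_cast Fintype.card_pos
  calc ∑ w : Vt m, ∑ q : Query k m,
        (1 / (Fintype.card (Query k m) : ℝ)) * RR m lam v w *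
          (if q j ((q g).symm w) = v' then (1:ℝ) else 0)
      = ∑ w : Vt m, (1 / (Fintype.card (Query k m) : ℝ)) * RR m lam v w *
          ((Fintype.card (Query k m) : ℝ) / (2*m)) := by
        refine Finset.sum_congr rfl fun w _ => ?_
        rw [← Finset.mul_sum, key w]
    _ = (∑ w : Vt m, RR m lam v w) * (1/(2*m)) := by
        rw [Finset.sum_mul]
        refine Finset.sum_congr rfl fun w _ => ?_
        have hN0 : (Fintype.card (Query k m) : ℝ) ≠ 0 := ne_of_gt hN
        have hr : 1 / (Fintype.card (Query k m):ℝ) * RR m lam v w *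
            ((Fintype.card (Query k m):ℝ) / (2*m))
            = RR m lam v w * (1/(2*m)) * ((Fintype.card (Query k m):ℝ) / (Fintype.card (Query k m):ℝ)) := by
          ring
        rw [hr, div_self hN0, mul_one]
    _ = 1 / (2*m) := by rw [hRR, one_mul]
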